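/- arXiv:2310.14663 — 5 statements merged into one kernel-verified Lean document; each statement's English description precedes it below -/
import Mathlib

section
/- For a positive semidefinite real matrix L indexed by a finite set ι and any subset A ⊆ ι, the sum over all subsets B of ι \ A of det(L_{A ∪ B}) equals det(L + I_Ā), where I_Ā is the diagonal matrix with ones at the diagonal entries indexed by ι \ A and zeros elsewhere. Consequently, the conditional DPP probability P(Y = A ∪ B | A ⊆ Y) = det(L_{A∪B}) / det(L + I_Ā) defines a probability distribution over subsets B ⊆ ι \ A. -/
open Matrix BigOperators

/-- Principal submatrix of `L` whose rows and columns are indexed by the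
elements of the finite subset `Y`. -/
def principalSub {ι : Type*} (L : Matrix ι ι ℝ) (Y : Finset ι) :
    Matrix Y Y ℝ :=
  L.submatrix (fun x => x.1) (fun x => x.1)

lemma det_piecewise_eq {ι : Type*} [Fintype ι] [DecidableEq ι]
    (L : Matrix ι ι ℝ) (A S : Finset ι) (hAS : A ⊆ S) :
    (Matrix.of (S.piecewise L
        (Matrix.diagonal fun i => if i ∈ A then (0 : ℝ) else 1))).det
      = (principalSub L S).det := by
  set D : Matrix ι ι ℝ := Matrix.diagonal fun i => if i ∈ A then (0 : ℝ) else 1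
  set M : Matrix ι ι ℝ := Matrix.of (S.piecewise L D)
  let e : {x // x ∈ S} ⊕ {x // x ∉ S} ≃ ι := Equiv.sumCompl (· ∈ S)
  have hsub : M.submatrix e e =
      Matrix.fromBlocks (principalSub L S)
        (L.submatrix (fun x : {x // x ∈ S} => x.1) (fun x : {x // x ∉ S} => x.1))
        0 1 := by
    ext i j
    cases i with
    | inl i =>
      cases j with
      | inl j =>
        simp [M, e, Matrix.submatrix_apply, Finset.piecewise_eq_of_mem S L D i.2,
          principalSub]
      | inr j =>
        simp [M, e, Matrix.submatrix_apply, Finset.piecewise_eq_of_mem S L D i.2]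
    | inr i =>
      cases j with
      | inl j =>
        have hij : i.1 ≠ j.1 := fun h => i.2 (h ▸ j.2)
        simp [M, e, D, Matrix.submatrix_apply,
          Finset.piecewise_eq_of_notMem S L D i.2, Matrix.diagonal_apply_ne _ hij]
      | inr j =>
        have hiA : i.1 ∉ A := fun h => i.2 (hAS h)
        by_cases h : i = j
        · subst h
          simp [M, e, D, Matrix.submatrix_apply,
            Finset.piecewise_eq_of_notMem S L D i.2, hiA]
        · have hij : i.1 ≠ j.1 := fun hh => h (Subtype.ext hh)
          simp [M, e, D, Matrix.submatrix_apply,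
            Finset.piecewise_eq_of_notMem S L D i.2,
            Matrix.diagonal_apply_ne _ hij, Matrix.one_apply_ne h]
  calc M.det = (M.submatrix e e).det := (Matrix.det_submatrix_equiv_self e M).symm
    _ = (principalSub L S).det := by
        rw [hsub, Matrix.det_fromBlocks_zero₂₁, Matrix.det_one, mul_one]

lemma key_sum {ι : Type*} [Fintype ι] [DecidableEq ι]
    (L : Matrix ι ι ℝ) (A : Finset ι) :
    ∑ B ∈ (Aᶜ : Finset ι).powerset, (principalSub L (A ∪ B)).det
      = (L + Matrix.diagonal fun i => if i ∈ A then (0 : ℝ) else 1).det := by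
  set D : Matrix ι ι ℝ := Matrix.diagonal fun i => if i ∈ A then (0 : ℝ) else 1
  have hdet : (L + D).det
      = ∑ S : Finset ι, (Matrix.of (S.piecewise L D)).det := by
    have := (Matrix.detRowAlternating : (ι → ℝ) [⋀^ι]→ₗ[ℝ] ℝ).toMultilinearMap.map_add_univ
       (fun i => L i) (fun i => D i)
    exact this
  rw [hdet]
  rw [← Finset.sum_filter_add_sum_filter_not Finset.univ (fun S => A ⊆ S)]
  have hzero : ∑ S ∈ Finset.univ.filter (fun S => ¬ A ⊆ S),
      (Matrix.of (S.piecewise L D)).det = 0 := by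
    apply Finset.sum_eq_zero
    intro S hS
    simp only [Finset.mem_filter] at hS
    obtain ⟨a, haA, haS⟩ := Finset.not_subset.mp hS.2
    apply Matrix.det_eq_zero_of_row_eq_zero a
    intro j
    simp [Finset.piecewise_eq_of_notMem S L D haS, D, Matrix.diagonal_apply, haA]
  rw [hzero, add_zero]
  refine Finset.sum_nbij' (fun B => A ∪ B) (fun S => S \ A) ?_ ?_ ?_ ?_ ?_
  · intro B hB
    simp [Finset.mem_filter]
  · intro S hS
    simp only [Finset.mem_filter, Finset.mem_univ, true_and] at hS
    simp only [Finset.mem_powerset]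
    intro x hx
    simp only [Finset.mem_sdiff] at hx
    exact Finset.mem_compl.mpr hx.2
  · intro B hB
    simp only [Finset.mem_powerset] at hB
    have hd : Disjoint A B := Finset.disjoint_left.mpr fun x hxA hxB =>
      (Finset.mem_compl.mp (hB hxB)) hxA
    exact Finset.union_sdiff_cancel_left hd
  · intro S hS
    simp only [Finset.mem_filter, Finset.mem_univ, true_and] at hS
    exact Finset.union_sdiff_of_subset hS
  · intro B hB
    exact (det_piecewise_eq L A (A ∪ B) Finset.subset_union_left).symm

/-- Conditional DPP normalization: for a positive semidefinite real matrix `L`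
indexed by a finite set `ι` and a subset `A ⊆ ι`,
`∑_{B ⊆ ι \ A} det(L_{A ∪ B}) = det(L + I_Ā)`, where `I_Ā` is the diagonal
matrix with ones on the diagonal entries indexed by `ι \ A` and zeros
elsewhere.  Consequently, whenever the normalization constant is nonzero, the
conditional DPP probabilities `det(L_{A∪B}) / det(L + I_Ā)` are nonnegative and
sum to one over the subsets `B ⊆ ι \ A`, i.e. they define a probability
distribution. -/
theorem conditional_dpp_normalization {ι : Type*} [Fintype ι] [DecidableEq ι]
    (L : Matrix ι ι ℝ) (hL : L.PosSemidef) (A : Finset ι)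
    (IAbar : Matrix ι ι ℝ)
    (hIAbar : IAbar = Matrix.diagonal fun i => if i ∈ A then (0 : ℝ) else 1) :
    (∑ B ∈ (Aᶜ : Finset ι).powerset, (principalSub L (A ∪ B)).det
        = (L + IAbar).det) ∧
    ((L + IAbar).det ≠ 0 →
      (∀ B ∈ (Aᶜ : Finset ι).powerset,
          0 ≤ (principalSub L (A ∪ B)).det / (L + IAbar).det) ∧
      ∑ B ∈ (Aᶜ : Finset ι).powerset,
          (principalSub L (A ∪ B)).det / (L + IAbar).det = 1) := by
  subst hIAbar
  have hkey := key_sum L A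
  have hnn : ∀ B : Finset ι, 0 ≤ (principalSub L (A ∪ B)).det := by
    intro B
    have hps : (principalSub L (A ∪ B)).PosSemidef := hL.submatrix _
    rw [hps.isHermitian.det_eq_prod_eigenvalues]
    exact Finset.prod_nonneg fun i _ => hps.eigenvalues_nonneg i
  refine ⟨hkey, fun hne => ⟨?_, ?_⟩⟩
  · intro B hB
    have hpos : 0 < (L + Matrix.diagonal fun i => if i ∈ A then (0 : ℝ) else 1).det := by
      rcases lt_or_eq_of_le (hkey ▸ Finset.sum_nonneg fun B _ => hnn B) with h | h
      · exact h
      · exact absurd h.symm hne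
    exact div_nonneg (hnn B) hpos.le
  · rw [← Finset.sum_div, hkey, div_self hne]
end

section
/- Marginal kernel of a conditional DPP: let L be a symmetric positive semidefinite real matrix indexed by a finite set ι, let A ⊆ ι, and assume L + I_Ā is invertible. Define the matrix K^A indexed by ι \ A as K^A = I − [(L + I_Ā)^{-1}]_{ι\A}, where [(L + I_Ā)^{-1}]_{ι\A} is the principal submatrix of (L + I_Ā)^{-1} indexed by ι \ A. Then for every subset B ⊆ ι \ A, the sum over all B' with B ⊆ B' ⊆ ι \ A of det(L_{A ∪ B'}) equals det(L + I_Ā) · det(K^A_B); that is, the conditional inclusion probability P(B ⊆ Y | A ⊆ Y) equals det(K^A_B). -/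
open Matrix BigOperators

lemma aux_posDef_of_psd {ι : Type*} [Fintype ι] [DecidableEq ι]
    {N : Matrix ι ι ℝ} (h : N.PosSemidef) (hdet : IsUnit N.det) : N.PosDef := by
  haveI : Invertible N := N.invertibleOfIsUnitDet hdet
  refine PosDef.of_dotProduct_mulVec_pos h.1 fun x hx => ?_
  rcases (h.dotProduct_mulVec_nonneg x).lt_or_eq with hlt | heq
  · exact hlt
  · exfalso
    have h0 : N *ᵥ x = 0 := (h.dotProduct_mulVec_zero_iff x).mp heq.symm
    have : x = 0 := by
      have := congrArg (fun v => (⅟N) *ᵥ v) h0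
      simpa [Matrix.mulVec_mulVec] using this
    exact hx this

lemma aux_posDef_submatrix {m ι : Type*} [Fintype m] [Fintype ι] [DecidableEq ι] [DecidableEq m]
    {N : Matrix ι ι ℝ} (hN : N.PosDef) {e : m → ι} (he : Function.Injective e) :
    (N.submatrix e e).PosDef := by
  classical
  refine PosDef.of_dotProduct_mulVec_pos (hN.1.submatrix e) fun x hx => ?_
  set y : ι → ℝ := Function.extend e x 0 with hy
  have hye : ∀ i, y (e i) = x i := fun i => he.extend_apply x 0 i
  have hy0 : ∀ k, k ∉ Finset.univ.image e → y k = 0 := by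
    intro k hk
    apply Function.extend_apply'
    rintro ⟨a, rfl⟩
    exact hk (Finset.mem_image.2 ⟨a, Finset.mem_univ a, rfl⟩)
  have hmv : ∀ i : m, (N *ᵥ y) (e i) = ((N.submatrix e e) *ᵥ x) i := by
    intro i
    simp only [Matrix.mulVec, dotProduct, Matrix.submatrix_apply]
    rw [← Finset.sum_subset (Finset.subset_univ (Finset.univ.image e))
      (fun l _ hl => by rw [hy0 l hl, mul_zero])]
    rw [Finset.sum_image (fun a _ b _ h => he h)]
    exact Finset.sum_congr rfl fun a _ => by rw [hye]
  have key : y ⬝ᵥ (N *ᵥ y) = x ⬝ᵥ ((N.submatrix e e) *ᵥ x) := by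
    simp only [dotProduct]
    rw [← Finset.sum_subset (Finset.subset_univ (Finset.univ.image e))
      (fun l _ hl => by rw [hy0 l hl, zero_mul])]
    rw [Finset.sum_image (fun a _ b _ h => he h)]
    exact Finset.sum_congr rfl fun a _ => by rw [hye, hmv]
  have hyne : y ≠ 0 := by
    obtain ⟨i, hi⟩ := Function.ne_iff.mp hx
    intro h
    apply hi
    rw [← hye i, h]; rfl
  have := hN.dotProduct_mulVec_pos hyne
  rw [star_trivial] at this ⊢
  rw [← key]
  exact this

lemma aux_piecewise_det {ι : Type*} [Fintype ι] [DecidableEq ι]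
    (M : Matrix ι ι ℝ) (d : ι → ℝ) (s : Finset ι) :
    Matrix.det (Matrix.of (s.piecewise M (Matrix.diagonal d)))
      = (∏ i ∈ sᶜ, d i) * (principalSub M s).det := by
  classical
  let e : {i // i ∈ s} ⊕ {i // ¬ i ∈ s} ≃ ι := Equiv.sumCompl (· ∈ s)
  rw [← Matrix.det_submatrix_equiv_self e]
  have hP : (Matrix.of (s.piecewise M (Matrix.diagonal d))).submatrix e e
      = Matrix.fromBlocks (principalSub M s)
          (M.submatrix (fun x : {i // i ∈ s} => x.1) (fun x : {i // ¬ i ∈ s} => x.1))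
          0 (Matrix.diagonal fun x : {i // ¬ i ∈ s} => d x.1) := by
    ext i j
    cases i with
    | inl i =>
      cases j with
      | inl j =>
        simp [e, Finset.piecewise, i.2, principalSub]
      | inr j =>
        simp [e, Finset.piecewise, i.2]
    | inr i =>
      cases j with
      | inl j =>
        have hne : i.1 ≠ j.1 := fun h => i.2 (h ▸ j.2)
        simp [e, Finset.piecewise, i.2, Matrix.diagonal_apply_ne _ hne]
      | inr j =>
        by_cases h : i = j
        · subst h; simp [e, Finset.piecewise, i.2]
        · have hne : i.1 ≠ j.1 := fun h' => h (Subtype.ext h')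
          simp [e, Finset.piecewise, i.2, Matrix.diagonal_apply_ne _ hne,
            Matrix.diagonal_apply_ne _ h]
  rw [hP, Matrix.det_fromBlocks_zero₂₁, Matrix.det_diagonal]
  rw [Finset.prod_subtype (p := fun i => ¬ i ∈ s) sᶜ (fun x => by simp) d]
  ring

lemma aux_det_add_diagonal {ι : Type*} [Fintype ι] [DecidableEq ι]
    (M : Matrix ι ι ℝ) (d : ι → ℝ) :
    (M + Matrix.diagonal d).det
      = ∑ s : Finset ι, (∏ i ∈ sᶜ, d i) * (principalSub M s).det := by
  classical
  have h := (Matrix.detRowAlternating :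
      AlternatingMap ℝ (ι → ℝ) ℝ ι).toMultilinearMap.map_add_univ M (Matrix.diagonal d)
  have h' : (M + Matrix.diagonal d).det
      = ∑ s : Finset ι, Matrix.det (Matrix.of (s.piecewise M (Matrix.diagonal d))) := h
  rw [h']
  exact Finset.sum_congr rfl fun s _ => aux_piecewise_det M d s

lemma aux_core {ι : Type*} [Fintype ι] [DecidableEq ι]
    (N : Matrix ι ι ℝ) (hN : N.PosDef) (B : Finset ι) :
    N.det * ((1 : Matrix B B ℝ)
        - (N⁻¹).submatrix (fun x : B => x.1) (fun x : B => x.1)).det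
      = (N - Matrix.diagonal (fun i => if i ∈ B then (1:ℝ) else 0)).det := by
  classical
  let e : {i // i ∈ B} ⊕ {i // ¬ i ∈ B} ≃ ι := Equiv.sumCompl (· ∈ B)
  set N' := N.submatrix e e with hN'def
  have hN' : N'.PosDef := aux_posDef_submatrix hN e.injective
  set P := N'.toBlocks₁₁ with hPdef
  set Q := N'.toBlocks₁₂ with hQdef
  set R := N'.toBlocks₂₁ with hRdef
  set S := N'.toBlocks₂₂ with hSdef
  have hblocks : N' = fromBlocks P Q R S := (fromBlocks_toBlocks N').symm
  have hSpd : S.PosDef := by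
    have : S = N'.submatrix Sum.inr Sum.inr := rfl
    rw [this]
    exact aux_posDef_submatrix hN' Sum.inr_injective
  haveI : Invertible S := S.invertibleOfIsUnitDet (isUnit_iff_ne_zero.2 hSpd.det_pos.ne')
  haveI : Invertible N := N.invertibleOfIsUnitDet (isUnit_iff_ne_zero.2 hN.det_pos.ne')
  haveI : Invertible N' := N'.invertibleOfIsUnitDet (isUnit_iff_ne_zero.2 hN'.det_pos.ne')
  haveI hFBinv : Invertible (fromBlocks P Q R S) := by rw [← hblocks]; infer_instance
  haveI : Invertible (P - Q * ⅟S * R) := invertibleOfFromBlocks₂₂Invertible P Q R S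
  set W := P - Q * ⅟S * R with hWdef
  have hsub : (N⁻¹).submatrix (fun x : B => x.1) (fun x : B => x.1) = ⅟W := by
    have h1 : N'⁻¹ = fromBlocks (⅟W) (-(⅟W * Q * ⅟S)) (-(⅟S * R * ⅟W))
        (⅟S + ⅟S * R * ⅟W * Q * ⅟S) := by
      rw [hblocks, ← invOf_eq_nonsing_inv]
      exact invOf_fromBlocks₂₂_eq P Q R S
    have h2 : N'⁻¹ = (N⁻¹).submatrix e e := by
      rw [hN'def, Matrix.inv_submatrix_equiv]
    ext i j
    have := congrFun (congrFun (h2.symm.trans h1) (Sum.inl i)) (Sum.inl j)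
    simpa [e, Matrix.fromBlocks, Equiv.sumCompl_apply_inl] using this
  rw [hsub]
  have hdetN : N.det = S.det * W.det := by
    rw [show N.det = N'.det from (Matrix.det_submatrix_equiv_self e N).symm, hblocks,
      Matrix.det_fromBlocks₂₂]
  have hone : W * ((1 : Matrix B B ℝ) - ⅟W) = W - 1 := by
    rw [Matrix.mul_sub, mul_invOf_self, Matrix.mul_one]
  have hdetW : W.det * ((1 : Matrix B B ℝ) - ⅟W).det = (W - 1).det := by
    rw [← Matrix.det_mul, hone]
  have hD : (Matrix.diagonal (fun i => if i ∈ B then (1:ℝ) else 0)).submatrix e e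
      = fromBlocks (1 : Matrix {i // i ∈ B} {i // i ∈ B} ℝ) 0 0 0 := by
    ext i j
    cases i with
    | inl i =>
      cases j with
      | inl j =>
        by_cases h : i = j
        · subst h; simp [e, i.2]
        · have hne : i.1 ≠ j.1 := fun h' => h (Subtype.ext h')
          simp [e, Matrix.diagonal_apply_ne _ hne, Matrix.one_apply_ne h]
      | inr j =>
        have hne : i.1 ≠ j.1 := fun h => j.2 (h ▸ i.2)
        simp [e, Matrix.diagonal_apply_ne _ hne]
    | inr i =>
      cases j with
      | inl j =>
        have hne : i.1 ≠ j.1 := fun h => i.2 (h ▸ j.2)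
        simp [e, Matrix.diagonal_apply_ne _ hne]
      | inr j =>
        by_cases h : i = j
        · subst h; simp [e, i.2]
        · have hne : i.1 ≠ j.1 := fun h' => h (Subtype.ext h')
          simp [e, Matrix.diagonal_apply_ne _ hne]
  have hRHS : (N - Matrix.diagonal (fun i => if i ∈ B then (1:ℝ) else 0)).det
      = S.det * (W - 1).det := by
    rw [← Matrix.det_submatrix_equiv_self e]
    simp only [Matrix.submatrix_sub, Pi.sub_apply]
    rw [← hN'def, hD, hblocks]
    have : fromBlocks P Q R S - fromBlocks (1 : Matrix {i // i ∈ B} {i // i ∈ B} ℝ) 0 0 0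
        = fromBlocks (P - 1) Q R S := by
      rw [sub_eq_add_neg, fromBlocks_neg, fromBlocks_add]
      simp [sub_eq_add_neg]
    rw [this, Matrix.det_fromBlocks₂₂]
    rw [hWdef, sub_right_comm]
  rw [hRHS, hdetN]
  rw [mul_assoc, hdetW]

/-- Marginal kernel of a conditional DPP: with `L` symmetric positive
semidefinite, `A ⊆ ι`, `L + I_Ā` invertible, and
`K^A = I − [(L + I_Ā)⁻¹]_{ι\A}` (a matrix indexed by `ι \ A`), for every
`B ⊆ ι \ A` the sum over all `B'` with `B ⊆ B' ⊆ ι \ A` of `det(L_{A ∪ B'})`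
equals `det(L + I_Ā) · det(K^A_B)`; i.e. the conditional inclusion probability
`P(B ⊆ Y | A ⊆ Y)` equals `det(K^A_B)`. -/
theorem conditional_dpp_marginal_kernel {ι : Type*} [Fintype ι] [DecidableEq ι]
    (L : Matrix ι ι ℝ) (hL : L.PosSemidef) (A : Finset ι)
    (IAbar : Matrix ι ι ℝ)
    (hIAbar : IAbar = Matrix.diagonal fun i => if i ∈ A then (0 : ℝ) else 1)
    (hinv : IsUnit (L + IAbar).det)
    (KA : Matrix (Aᶜ : Finset ι) (Aᶜ : Finset ι) ℝ)
    (hKA : KA = 1 - ((L + IAbar)⁻¹).submatrix (fun x => x.1) (fun x => x.1))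
    (B : Finset ι) (hB : B ⊆ Aᶜ) :
    ∑ B' ∈ (Aᶜ : Finset ι).powerset.filter (fun B' => B ⊆ B'),
        (principalSub L (A ∪ B')).det
      = (L + IAbar).det *
        (KA.submatrix (fun b : B => (⟨b.1, hB b.2⟩ : (Aᶜ : Finset ι)))
          (fun b : B => (⟨b.1, hB b.2⟩ : (Aᶜ : Finset ι)))).det := by
  classical
  set N := L + IAbar with hNdef
  have hNpsd : N.PosSemidef := by
    rw [hNdef, hIAbar]
    exact hL.add (Matrix.PosSemidef.diagonal (fun i => by dsimp; split <;> norm_num))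
  have hNpd : N.PosDef := aux_posDef_of_psd hNpsd hinv
  have hAB : ∀ i, i ∈ B → i ∉ A := fun i hi => Finset.mem_compl.1 (hB hi)
  -- Step 1: rewrite the RHS submatrix of KA
  have hKsub : (KA.submatrix (fun b : B => (⟨b.1, hB b.2⟩ : (Aᶜ : Finset ι)))
          (fun b : B => (⟨b.1, hB b.2⟩ : (Aᶜ : Finset ι))))
      = (1 : Matrix B B ℝ) - (N⁻¹).submatrix (fun x : B => x.1) (fun x : B => x.1) := by
    subst hKA
    ext i j
    by_cases h : i = j
    · subst h
      simp [Matrix.one_apply, Matrix.submatrix_apply]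
    · have h' : (⟨i.1, hB i.2⟩ : (Aᶜ : Finset ι)) ≠ ⟨j.1, hB j.2⟩ := by
        intro hc
        exact h (Subtype.ext (Subtype.mk_eq_mk.mp hc))
      simp [Matrix.one_apply, Matrix.submatrix_apply, h, h']
  rw [hKsub, aux_core N hNpd B]
  -- Step 2: identify N - diag(χ_B) with L + diag(d')
  have hdiag : N - Matrix.diagonal (fun i => if i ∈ B then (1:ℝ) else 0)
      = L + Matrix.diagonal (fun i => if i ∈ A ∪ B then (0:ℝ) else 1) := by
    rw [hNdef, hIAbar, add_sub_assoc, Matrix.diagonal_sub]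
    congr 1
    have hfun : (fun i => (if i ∈ A then (0:ℝ) else 1) - if i ∈ B then (1:ℝ) else 0)
        = fun i => if i ∈ A ∪ B then (0:ℝ) else 1 := by
      funext i
      by_cases hiA : i ∈ A
      · have : i ∉ B := fun hc => hAB i hc hiA
        simp [hiA, this, Finset.mem_union]
      · by_cases hiB : i ∈ B
        · simp [hiA, hiB, Finset.mem_union]
        · simp [hiA, hiB, Finset.mem_union]
    rw [hfun]
  rw [hdiag, aux_det_add_diagonal]
  -- Step 3: kill the weights
  have hw : ∀ s : Finset ι,
      (∏ i ∈ sᶜ, (if i ∈ A ∪ B then (0:ℝ) else 1)) * (principalSub L s).det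
        = if A ∪ B ⊆ s then (principalSub L s).det else 0 := by
    intro s
    by_cases h : A ∪ B ⊆ s
    · rw [if_pos h, Finset.prod_eq_one, one_mul]
      intro i hi
      have : i ∉ A ∪ B := fun hc => (Finset.mem_compl.1 hi) (h hc)
      simp [this]
    · rw [if_neg h]
      obtain ⟨i, hiAB, his⟩ := Finset.not_subset.mp h
      rw [Finset.prod_eq_zero (Finset.mem_compl.2 his), zero_mul]
      simp [hiAB]
  rw [Finset.sum_congr rfl (fun s _ => hw s)]
  rw [← Finset.sum_filter]
  -- Step 4: the bijection B' ↦ A ∪ B'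
  refine Finset.sum_nbij' (fun B' => A ∪ B') (fun s => s \ A) ?_ ?_ ?_ ?_ ?_
  · intro B' hB'
    rw [Finset.mem_filter, Finset.mem_powerset] at hB'
    exact Finset.mem_filter.2 ⟨Finset.mem_univ _,
      Finset.union_subset_union_right hB'.2⟩
  · intro s hs
    rw [Finset.mem_filter] at hs
    have hAs : A ⊆ s := (Finset.union_subset_iff.mp hs.2).1
    have hBs : B ⊆ s := (Finset.union_subset_iff.mp hs.2).2
    rw [Finset.mem_filter, Finset.mem_powerset]
    constructor
    · intro x hx
      rw [Finset.mem_sdiff] at hx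
      exact Finset.mem_compl.2 hx.2
    · intro x hx
      exact Finset.mem_sdiff.2 ⟨hBs hx, fun hc => hAB x hx hc⟩
  · intro B' hB'
    rw [Finset.mem_filter, Finset.mem_powerset] at hB'
    show (A ∪ B') \ A = B'
    rw [Finset.union_sdiff_left]
    exact Finset.sdiff_eq_self_of_disjoint
      (Finset.disjoint_left.2 fun x hx hA => Finset.mem_compl.1 (hB'.1 hx) hA)
  · intro s hs
    rw [Finset.mem_filter] at hs
    show A ∪ (s \ A) = s
    exact Finset.union_sdiff_of_subset (Finset.union_subset_iff.mp hs.2).1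
  · intro B' _
    rfl
end

section
/- Marginal kernel of an (unconditional) DPP: let L be a symmetric positive semidefinite real matrix indexed by a finite set ι, and set K = L(L + I)^{-1} (equivalently K = I − (L + I)^{-1}). Then for every subset B ⊆ ι, the sum over all Y with B ⊆ Y ⊆ ι of det(L_Y) equals det(L + I) · det(K_B); that is, the inclusion probability P(B ⊆ Y) under the DPP with kernel L equals det(K_B). -/
open Matrix BigOperators

/-- Determinant of a matrix whose rows indexed by `T` are identity rows:
it equals the determinant of the principal submatrix over the complement. -/
lemma det_ite_rows {ι : Type*} [Fintype ι] [DecidableEq ι]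
    (M : Matrix ι ι ℝ) (T : Finset ι) :
    (Matrix.of fun i j => if i ∈ T then (1 : Matrix ι ι ℝ) i j else M i j).det
      = (M.submatrix (fun x : {x : ι // x ∉ T} => x.1) (fun x => x.1)).det := by
  classical
  set N : Matrix ι ι ℝ :=
    Matrix.of fun i j => if i ∈ T then (1 : Matrix ι ι ℝ) i j else M i j with hN
  let e : {x : ι // x ∈ T} ⊕ {x : ι // x ∉ T} ≃ ι := Equiv.sumCompl (· ∈ T)
  have h : N.submatrix e e =
      Matrix.fromBlocks 1 0 (Matrix.of fun (i : {x : ι // x ∉ T}) (j : {x : ι // x ∈ T}) => M i.1 j.1)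
        (M.submatrix (fun x : {x : ι // x ∉ T} => x.1) (fun x => x.1)) := by
    ext i j
    cases i with
    | inl i =>
      cases j with
      | inl j =>
        simp [N, e, Matrix.one_apply, i.2]
      | inr j =>
        have hij : (i : ι) ≠ (j : ι) := fun h => j.2 (h ▸ i.2)
        simp [N, e, Matrix.one_apply, hij, i.2]
    | inr i =>
      cases j with
      | inl j => simp [N, e, i.2]
      | inr j => simp [N, e, i.2]
  calc N.det = (N.submatrix e e).det := (Matrix.det_submatrix_equiv_self e N).symm
    _ = _ := by rw [h, Matrix.det_fromBlocks_zero₁₂, Matrix.det_one, one_mul]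

/-- Reindexing the principal submatrix over the complement. -/
lemma det_principalSub_compl {ι : Type*} [Fintype ι] [DecidableEq ι]
    (M : Matrix ι ι ℝ) (s : Finset ι) :
    (M.submatrix (fun x : {x : ι // x ∉ s} => x.1) (fun x => x.1)).det
      = (principalSub M sᶜ).det := by
  classical
  let e : {x : ι // x ∉ s} ≃ {x : ι // x ∈ sᶜ} :=
    Equiv.subtypeEquivRight (fun x => (Finset.mem_compl).symm)
  rw [← Matrix.det_submatrix_equiv_self e (principalSub M sᶜ)]
  rfl

/-- The sum of principal minors over supersets of `B` equals the determinant of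
`M` plus the diagonal indicator of the complement of `B`. -/
lemma det_add_diag {ι : Type*} [Fintype ι] [DecidableEq ι]
    (M : Matrix ι ι ℝ) (B : Finset ι) :
    (M + Matrix.diagonal (fun i => if i ∈ B then (0:ℝ) else 1)).det
      = ∑ Y ∈ (Finset.univ : Finset (Finset ι)).filter (fun Y => B ⊆ Y),
          (principalSub M Y).det := by
  classical
  set D : Matrix ι ι ℝ := Matrix.diagonal (fun i => if i ∈ B then (0:ℝ) else 1) with hD
  have h0 : (M + D).det
      = ∑ s : Finset ι,
          (Matrix.detRowAlternating (s.piecewise (fun i => D i) (fun i => M i)) : ℝ) := by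
    have h1 : (M + D).det
        = Matrix.detRowAlternating ((fun i => D i) + (fun i => M i)) := by
      congr 1
      funext i j
      exact add_comm (M i j) (D i j)
    rw [h1]
    exact Matrix.detRowAlternating.toMultilinearMap.map_add_univ (fun i => D i) (fun i => M i)
  have h2 : ∀ s : Finset ι,
      (Matrix.detRowAlternating (s.piecewise (fun i => D i) (fun i => M i)) : ℝ)
        = (Matrix.of fun i j => if i ∈ s then D i j else M i j).det := by
    intro s
    congr 1
    funext i
    funext j
    by_cases h : i ∈ s <;> simp [Finset.piecewise, h]
  rw [h0]
  rw [Finset.sum_congr rfl fun s _ => h2 s]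
  -- terms with `s` meeting `B` vanish
  have h3 : ∑ s : Finset ι, (Matrix.of fun i j => if i ∈ s then D i j else M i j).det
      = ∑ s ∈ (Finset.univ : Finset (Finset ι)).filter (fun s => s ⊆ Bᶜ),
          (Matrix.of fun i j => if i ∈ s then D i j else M i j).det := by
    symm
    apply Finset.sum_subset (Finset.filter_subset _ _)
    intro s _ hs
    simp only [Finset.mem_filter, Finset.mem_univ, true_and] at hs
    obtain ⟨i, his, hiB⟩ : ∃ i ∈ s, i ∈ B := by
      by_contra hcon
      push_neg at hcon
      exact hs fun x hx => Finset.mem_compl.2 (hcon x hx)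
    apply Matrix.det_eq_zero_of_row_eq_zero i
    intro j
    simp [his, hD, Matrix.diagonal_apply, hiB]
  rw [h3]
  have h4 : ∀ s ∈ (Finset.univ : Finset (Finset ι)).filter (fun s => s ⊆ Bᶜ),
      (Matrix.of fun i j => if i ∈ s then D i j else M i j).det
        = (principalSub M sᶜ).det := by
    intro s hs
    simp only [Finset.mem_filter, Finset.mem_univ, true_and] at hs
    have heq : (Matrix.of fun i j => if i ∈ s then D i j else M i j)
        = Matrix.of fun i j => if i ∈ s then (1 : Matrix ι ι ℝ) i j else M i j := by
      ext i j
      by_cases his : i ∈ s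
      · have hiB : i ∉ B := Finset.mem_compl.1 (hs his)
        simp [his, hD, Matrix.diagonal_apply, Matrix.one_apply, hiB]
      · simp [his]
    rw [heq, det_ite_rows, det_principalSub_compl]
  rw [Finset.sum_congr rfl h4]
  -- bijection `s ↦ sᶜ`
  refine Finset.sum_nbij' (fun s => sᶜ) (fun Y => Yᶜ) ?_ ?_ ?_ ?_ ?_
  · intro s hs
    simp only [Finset.mem_filter, Finset.mem_univ, true_and] at hs ⊢
    intro x hx
    exact Finset.mem_compl.2 fun hxs => Finset.mem_compl.1 (hs hxs) hx
  · intro Y hY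
    simp only [Finset.mem_filter, Finset.mem_univ, true_and] at hY ⊢
    intro x hx
    exact Finset.mem_compl.2 fun hxB => Finset.mem_compl.1 hx (hY hxB)
  · intro s _; exact compl_compl s
  · intro Y _; exact compl_compl Y
  · intro s _; rfl

/-- Marginal kernel of an (unconditional) DPP: with `L` symmetric positive
semidefinite and `K = L (L + I)⁻¹`, for every subset `B ⊆ ι` the sum over all
`Y` with `B ⊆ Y ⊆ ι` of `det(L_Y)` equals `det(L + I) · det(K_B)`; i.e. the
inclusion probability `P(B ⊆ Y)` under the DPP with kernel `L` is `det(K_B)`. -/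
theorem dpp_marginal_kernel {ι : Type*} [Fintype ι] [DecidableEq ι]
    (L : Matrix ι ι ℝ) (hL : L.PosSemidef)
    (K : Matrix ι ι ℝ) (hK : K = L * (L + 1)⁻¹)
    (B : Finset ι) :
    ∑ Y ∈ (Finset.univ : Finset (Finset ι)).filter (fun Y => B ⊆ Y),
        (principalSub L Y).det
      = (L + 1).det * (principalSub K B).det := by
  classical
  set A : Matrix ι ι ℝ := L + 1 with hA
  have hApd : A.PosDef := Matrix.PosDef.posSemidef_add hL Matrix.PosDef.one
  have hAd : IsUnit A.det := isUnit_iff_ne_zero.mpr hApd.det_pos.ne'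
  have hKe : K = 1 - A⁻¹ := by
    rw [hK]
    have h1 : L = A - 1 := by rw [hA, add_sub_cancel_right]
    rw [h1, Matrix.sub_mul, Matrix.one_mul, Matrix.mul_nonsing_inv A hAd]
  set E : Matrix ι ι ℝ := Matrix.diagonal (fun i => if i ∈ B then (1:ℝ) else 0) with hE
  set D : Matrix ι ι ℝ := Matrix.diagonal (fun i => if i ∈ B then (0:ℝ) else 1) with hD
  have h1E : (1 : Matrix ι ι ℝ) - E = D := by
    ext i j
    rcases eq_or_ne i j with rfl | h
    · by_cases hiB : i ∈ B <;>
        simp [hE, hD, Matrix.one_apply_eq, Matrix.diagonal_apply_eq, hiB,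
          Matrix.sub_apply]
    · simp [hE, hD, Matrix.one_apply_ne h, Matrix.diagonal_apply_ne _ h,
        Matrix.sub_apply]
  have hLD : L + D = A * (1 - A⁻¹ * E) := by
    rw [Matrix.mul_sub, Matrix.mul_one, ← Matrix.mul_assoc,
      Matrix.mul_nonsing_inv A hAd, Matrix.one_mul, hA, add_sub_assoc, h1E]
  have hstep : (1 - A⁻¹ * E).det = (principalSub K B).det := by
    have htr : (1 - A⁻¹ * E)ᵀ
        = Matrix.of fun i j => if i ∈ Bᶜ then (1 : Matrix ι ι ℝ) i j else Kᵀ i j := by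
      ext i j
      by_cases hiB : i ∈ B
      · have : i ∉ Bᶜ := by simp [hiB]
        simp [this, hKe, Matrix.transpose_apply, Matrix.sub_apply,
          Matrix.mul_diagonal, hE, hiB]
      · have : i ∈ Bᶜ := Finset.mem_compl.2 hiB
        simp [this, Matrix.transpose_apply, Matrix.sub_apply,
          Matrix.mul_diagonal, hE, hiB, Matrix.one_apply, eq_comm]
    have h5 : (1 - A⁻¹ * E).det = (1 - A⁻¹ * E)ᵀ.det := (Matrix.det_transpose _).symm
    rw [h5, htr, det_ite_rows]
    have h6 : (Kᵀ.submatrix (fun x : {x : ι // x ∉ Bᶜ} => x.1) (fun x => x.1))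
        = (K.submatrix (fun x : {x : ι // x ∉ Bᶜ} => x.1) (fun x => x.1))ᵀ := rfl
    rw [h6, Matrix.det_transpose, det_principalSub_compl, compl_compl]
  calc ∑ Y ∈ (Finset.univ : Finset (Finset ι)).filter (fun Y => B ⊆ Y),
        (principalSub L Y).det
      = (L + D).det := (det_add_diag L B).symm
    _ = A.det * (1 - A⁻¹ * E).det := by rw [hLD, Matrix.det_mul]
    _ = (L + 1).det * (principalSub K B).det := by rw [hstep, hA]
end

section
/- MIC objective of conditional DPPs (Proposition 1, objective formula): let L be a symmetric positive semidefinite real matrix indexed by a finite set ι, let A ⊆ ι, and assume L + I_Ā is invertible. Then the expected cardinality of the sampled set B under the conditional DPP given A, namely ∑_{B ⊆ ι\A} |B| · det(L_{A∪B}) / det(L + I_Ā), equals tr(I − [(L + I_Ā)^{-1}]_{ι\A}), where [(L + I_Ā)^{-1}]_{ι\A} is the principal submatrix of (L + I_Ā)^{-1} indexed by ι \ A and I is the identity matrix of the same size. -/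
open Matrix BigOperators

section Helpers
variable {ι : Type*} [Fintype ι] [DecidableEq ι]


lemma det_piecewise_one (L : Matrix ι ι ℝ) (T : Finset ι) :
    (Matrix.of (T.piecewise L (1 : Matrix ι ι ℝ))).det = (principalSub L T).det := by
  classical
  let e : ((T : Type _) ⊕ ((Tᶜ : Finset ι) : Type _)) ≃ ι :=
    (Equiv.sumCongr (Equiv.refl _) (Equiv.subtypeEquivRight (fun x => by simp))).trans
      (Equiv.sumCompl (· ∈ T))
  have he1 : ∀ a : (T : Type _), e (Sum.inl a) = a.1 := fun a => rfl
  have he2 : ∀ a : ((Tᶜ : Finset ι) : Type _), e (Sum.inr a) = a.1 := fun a => rfl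
  rw [← Matrix.det_submatrix_equiv_self e]
  have hsub : (Matrix.of (T.piecewise L (1 : Matrix ι ι ℝ))).submatrix e e =
      Matrix.fromBlocks (principalSub L T)
        (L.submatrix (fun x : (T : Type _) => x.1)
          (fun x : ((Tᶜ : Finset ι) : Type _) => x.1)) 0 1 := by
    ext a b
    cases a with
    | inl a =>
      cases b with
      | inl b =>
        simp [he1, principalSub, Finset.piecewise, a.2]
      | inr b =>
        simp [he1, he2, Finset.piecewise, a.2]
    | inr a =>
      have ha : a.1 ∉ T := Finset.mem_compl.mp a.2
      cases b with
      | inl b =>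
        have : a.1 ≠ b.1 := fun h => ha (h ▸ b.2)
        simp [he1, he2, Finset.piecewise, ha, Matrix.one_apply, this]
      | inr b =>
        have hq : ∀ k, (T.piecewise L (1 : Matrix ι ι ℝ) : ι → ι → ℝ) a.1 k = (1 : Matrix ι ι ℝ) a.1 k :=
          fun k => by
            change (if a.1 ∈ T then L a.1 else (1 : Matrix ι ι ℝ) a.1) k = _
            rw [if_neg ha]
        rw [Matrix.submatrix_apply, he2, he2, Matrix.fromBlocks_apply₂₂, Matrix.of_apply, hq]
        by_cases h : a = b
        · subst h; simp
        · have h' : a.1 ≠ b.1 := fun e => h (Subtype.ext e)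
          rw [Matrix.one_apply_ne h, Matrix.one_apply_ne h']
  rw [hsub, Matrix.det_fromBlocks_zero₂₁, Matrix.det_one, mul_one]

lemma det_add_diagonal (L : Matrix ι ι ℝ) (d : ι → ℝ) :
    (L + Matrix.diagonal d).det = ∑ T : Finset ι, (∏ j ∈ Tᶜ, d j) * (principalSub L T).det := by
  classical
  have h1 : (L + Matrix.diagonal d).det
      = ∑ T : Finset ι,
          Matrix.detRowAlternating (Matrix.of (T.piecewise L (Matrix.diagonal d))) := by
    exact Matrix.detRowAlternating.toMultilinearMap.map_add_univ L (Matrix.diagonal d)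
  rw [h1]
  refine Finset.sum_congr rfl fun T _ => ?_
  set m : Matrix ι ι ℝ := Matrix.of (T.piecewise L (1 : Matrix ι ι ℝ)) with hm
  have hpw : (T.piecewise L (Matrix.diagonal d) : ι → ι → ℝ)
      = (Tᶜ).piecewise (fun j => d j • m j) m := by
    funext j
    by_cases hj : j ∈ T
    · simp only [Finset.piecewise, hj, if_true, Finset.mem_compl, not_true_eq_false, if_false, hm]
      funext k
      change L j k = (if j ∈ T then L j else (1 : Matrix ι ι ℝ) j) k
      rw [if_pos hj]
    · simp only [Finset.piecewise, hj, if_false, Finset.mem_compl, not_false_eq_true, if_true, hm]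
      funext k
      have hq : ∀ k, (T.piecewise L (1 : Matrix ι ι ℝ) : ι → ι → ℝ) j k = (1 : Matrix ι ι ℝ) j k :=
        fun k => by
          change (if j ∈ T then L j else (1 : Matrix ι ι ℝ) j) k = _
          rw [if_neg hj]
      simp [Matrix.diagonal_apply, Matrix.one_apply, hj, hq]
  show Matrix.detRowAlternating (T.piecewise L (Matrix.diagonal d)) = _
  rw [hpw]
  have := Matrix.detRowAlternating.toMultilinearMap.map_piecewise_smul d (m : ι → ι → ℝ) Tᶜ
  refine this.trans ?_
  rw [smul_eq_mul]
  congr 1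
  exact det_piecewise_one L T

lemma det_add_diagonal_subset (L : Matrix ι ι ℝ) (A : Finset ι) (d : ι → ℝ)
    (hd : ∀ j ∈ A, d j = 0) :
    (L + Matrix.diagonal d).det
      = ∑ B ∈ (Aᶜ : Finset ι).powerset,
          (∏ j ∈ Aᶜ \ B, d j) * (principalSub L (A ∪ B)).det := by
  classical
  rw [det_add_diagonal]
  rw [← Finset.sum_filter_of_ne
    (p := fun T : Finset ι => A ⊆ T) (fun T _ hT => by
      by_contra hAT
      obtain ⟨a, haA, haT⟩ := Finset.not_subset.mp hAT
      exact hT (by rw [Finset.prod_eq_zero (Finset.mem_compl.mpr haT) (hd a haA), zero_mul]))]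
  refine Finset.sum_nbij' (fun T => T \ A) (fun B => A ∪ B) ?_ ?_ ?_ ?_ ?_
  · intro T hT
    simp only [Finset.mem_powerset]
    intro x hx
    simp only [Finset.mem_sdiff] at hx
    exact Finset.mem_compl.mpr hx.2
  · intro B hB
    simp only [Finset.mem_filter, Finset.mem_univ, true_and]
    exact Finset.subset_union_left
  · intro T hT
    simp only [Finset.mem_filter] at hT
    exact Finset.union_sdiff_of_subset hT.2
  · intro B hB
    simp only [Finset.mem_powerset] at hB
    ext x
    simp only [Finset.mem_sdiff, Finset.mem_union]
    constructor
    · rintro ⟨h1 | h1, h2⟩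
      · exact absurd h1 h2
      · exact h1
    · intro hx
      exact ⟨Or.inr hx, fun hxA => Finset.mem_compl.mp (hB hx) hxA⟩
  · intro T hT
    simp only [Finset.mem_filter] at hT
    have hU : A ∪ T \ A = T := Finset.union_sdiff_of_subset hT.2
    have hC : Aᶜ \ (T \ A) = Tᶜ := by
      ext x
      simp only [Finset.mem_sdiff, Finset.mem_compl]
      constructor
      · rintro ⟨h1, h2⟩
        intro hxT
        exact h2 ⟨hxT, h1⟩
      · intro h1
        exact ⟨fun hxA => h1 (hT.2 hxA), fun h => h1 h.1⟩
    rw [hU, hC]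

lemma det_add_diag_single (M : Matrix ι ι ℝ) (i : ι) :
    (M + Matrix.diagonal (Pi.single i (1 : ℝ))).det = M.det + M.adjugate i i := by
  have h : M + Matrix.diagonal (Pi.single i (1 : ℝ))
      = M.updateRow i (M i + Pi.single i 1) := by
    ext a b
    by_cases ha : a = i
    · subst ha
      simp [Matrix.updateRow_self, Matrix.diagonal_apply, Pi.single_apply, eq_comm]
    · simp [Matrix.updateRow_ne ha, Matrix.diagonal_apply, Pi.single_apply, ha]
  rw [h, Matrix.det_updateRow_add, Matrix.updateRow_eq_self, Matrix.adjugate_apply]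

end Helpers

/-- MIC objective of conditional DPPs (objective formula): with `L` symmetric
positive semidefinite, `A ⊆ ι`, and `L + I_Ā` invertible, the expected
cardinality of the sampled set under the conditional DPP given `A`, namely
`∑_{B ⊆ ι\A} |B| · det(L_{A∪B}) / det(L + I_Ā)`, equals
`tr(I − [(L + I_Ā)⁻¹]_{ι\A})`. -/
theorem conditional_dpp_expected_cardinality {ι : Type*} [Fintype ι]
    [DecidableEq ι] (L : Matrix ι ι ℝ) (hL : L.PosSemidef) (A : Finset ι)
    (IAbar : Matrix ι ι ℝ)
    (hIAbar : IAbar = Matrix.diagonal fun i => if i ∈ A then (0 : ℝ) else 1)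
    (hinv : IsUnit (L + IAbar).det) :
    ∑ B ∈ (Aᶜ : Finset ι).powerset,
        (B.card : ℝ) * (principalSub L (A ∪ B)).det / (L + IAbar).det
      = ((1 : Matrix (Aᶜ : Finset ι) (Aᶜ : Finset ι) ℝ)
          - ((L + IAbar)⁻¹).submatrix (fun x : (Aᶜ : Finset ι) => x.1) (fun x : (Aᶜ : Finset ι) => x.1)).trace := by
  classical
  subst hIAbar
  set dA : ι → ℝ := fun j => if j ∈ A then (0 : ℝ) else 1 with hdA
  set M : Matrix ι ι ℝ := L + Matrix.diagonal dA with hMdef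
  set x : Finset ι → ℝ := fun B => (principalSub L (A ∪ B)).det with hx
  have hdet : M.det ≠ 0 := hinv.ne_zero
  have h0 : M.det = ∑ B ∈ (Aᶜ : Finset ι).powerset, x B := by
    rw [hMdef, det_add_diagonal_subset L A dA (fun j hj => by simp [hdA, hj])]
    refine Finset.sum_congr rfl fun B hB => ?_
    rw [Finset.prod_eq_one fun j hj => ?_, one_mul]
    have hj1 := (Finset.mem_sdiff.mp hj).1
    simp [hdA, Finset.mem_compl.mp hj1]
  have h1 : ∀ i ∈ (Aᶜ : Finset ι),
      (∑ B ∈ (Aᶜ : Finset ι).powerset, (if i ∈ B then (1:ℝ) else 0) * x B)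
        = M.det - M.adjugate i i := by
    intro i hi
    have hiA : i ∉ A := Finset.mem_compl.mp hi
    have hd' : ∀ j ∈ A, dA j + (Pi.single i (1:ℝ) : ι → ℝ) j = 0 := by
      intro j hj
      have hji : j ≠ i := fun h => hiA (h ▸ hj)
      simp [hdA, hj, Pi.single_apply, hji]
    have hdet2 : (M + Matrix.diagonal (Pi.single i (1:ℝ))).det
        = ∑ B ∈ (Aᶜ : Finset ι).powerset, (if i ∈ B then (1:ℝ) else 2) * x B := by
      have hMM : M + Matrix.diagonal (Pi.single i (1:ℝ))
          = L + Matrix.diagonal (fun j => dA j + (Pi.single i (1:ℝ) : ι → ℝ) j) := by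
        rw [hMdef, add_assoc, ← Matrix.diagonal_add]
      rw [hMM, det_add_diagonal_subset L A _ hd']
      refine Finset.sum_congr rfl fun B hB => ?_
      congr 1
      by_cases hiB : i ∈ B
      · rw [if_pos hiB]
        refine Finset.prod_eq_one fun j hj => ?_
        obtain ⟨hj1, hj2⟩ := Finset.mem_sdiff.mp hj
        have hji : j ≠ i := fun h => hj2 (h ▸ hiB)
        simp [hdA, Finset.mem_compl.mp hj1, Pi.single_apply, hji]
      · rw [if_neg hiB]
        have him : i ∈ Aᶜ \ B := Finset.mem_sdiff.mpr ⟨hi, hiB⟩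
        rw [Finset.prod_eq_single_of_mem i him ?_]
        · norm_num [hdA, hiA, Pi.single_apply]
        · intro j hj hji
          obtain ⟨hj1, hj2⟩ := Finset.mem_sdiff.mp hj
          simp [hdA, Finset.mem_compl.mp hj1, Pi.single_apply, hji]
    have hdet3 := det_add_diag_single M i
    have hexp : ∑ B ∈ (Aᶜ : Finset ι).powerset, (if i ∈ B then (1:ℝ) else 2) * x B
        = 2 * (∑ B ∈ (Aᶜ : Finset ι).powerset, x B)
          - ∑ B ∈ (Aᶜ : Finset ι).powerset, (if i ∈ B then (1:ℝ) else 0) * x B := by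
      rw [Finset.mul_sum, ← Finset.sum_sub_distrib]
      refine Finset.sum_congr rfl fun B _ => ?_
      by_cases h : i ∈ B <;> simp [h] <;> ring
    have key : M.det + M.adjugate i i
        = 2 * M.det - ∑ B ∈ (Aᶜ : Finset ι).powerset, (if i ∈ B then (1:ℝ) else 0) * x B := by
      rw [← hdet3, hdet2, hexp, ← h0]
    linarith
  have hinvdiag : ∀ i : ι, M⁻¹ i i = (M.det)⁻¹ * M.adjugate i i := by
    intro i
    rw [Matrix.inv_def, Ring.inverse_eq_inv]
    simp [Matrix.smul_apply]
  have hLHS : ∑ B ∈ (Aᶜ : Finset ι).powerset, (B.card : ℝ) * x B / M.det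
      = ∑ i ∈ (Aᶜ : Finset ι), (1 - M⁻¹ i i) := by
    have hcard : ∀ B ∈ (Aᶜ : Finset ι).powerset,
        (B.card : ℝ) = ∑ i ∈ (Aᶜ : Finset ι), (if i ∈ B then (1:ℝ) else 0) := by
      intro B hB
      rw [Finset.sum_ite_mem, Finset.inter_eq_right.mpr (Finset.mem_powerset.mp hB)]
      simp
    calc ∑ B ∈ (Aᶜ : Finset ι).powerset, (B.card : ℝ) * x B / M.det
        = ∑ B ∈ (Aᶜ : Finset ι).powerset, ∑ i ∈ (Aᶜ : Finset ι),
            (if i ∈ B then (1:ℝ) else 0) * x B / M.det := by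
          refine Finset.sum_congr rfl fun B hB => ?_
          rw [hcard B hB, Finset.sum_mul, Finset.sum_div]
      _ = ∑ i ∈ (Aᶜ : Finset ι), ∑ B ∈ (Aᶜ : Finset ι).powerset,
            (if i ∈ B then (1:ℝ) else 0) * x B / M.det := Finset.sum_comm
      _ = ∑ i ∈ (Aᶜ : Finset ι), (1 - M⁻¹ i i) := by
          refine Finset.sum_congr rfl fun i hi => ?_
          rw [← Finset.sum_div, h1 i hi, hinvdiag i]
          field_simp
  rw [hLHS, Matrix.trace]
  rw [← Finset.sum_coe_sort (Aᶜ : Finset ι) (fun i => 1 - M⁻¹ i i)]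
  refine Finset.sum_congr rfl fun j _ => ?_
  simp [Matrix.diag, Matrix.sub_apply, Matrix.one_apply_eq]
end

section
/- Proposition 1 (derivative of the conditional MIC objective): let ι be a finite index set, A ⊆ ι, and let θ ↦ L(θ) be a map from ℝ to real matrices indexed by ι × ι whose entries are differentiable at θ₀, with L(θ₀) + I_Ā invertible. Then the MIC objective θ ↦ tr(I − [(L(θ) + I_Ā)⁻¹]_{ι\A}) is differentiable at θ₀ with derivative tr( (L(θ₀) + I_Ā)⁻¹ · I_Ā · (L(θ₀) + I_Ā)⁻¹ · L'(θ₀) ), i.e., the Frobenius inner product of ((L + I_Ā)⁻¹ I_Ā (L + I_Ā)⁻¹)ᵀ with the entrywise derivative ∂L/∂θ at θ₀. -/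
open Matrix BigOperators

section Aux

attribute [local instance] Matrix.linftyOpNormedAddCommGroup Matrix.linftyOpNormedRing
  Matrix.linftyOpNormedAlgebra

variable {ι : Type*} [Fintype ι] [DecidableEq ι]

/-- The identity as a continuous linear equiv between matrices (ℓ∞-op norm) and pi type. -/
noncomputable def matrixCLE (ι : Type*) [Fintype ι] [DecidableEq ι] :
    Matrix ι ι ℝ ≃L[ℝ] (ι → ι → ℝ) :=
  LinearEquiv.toContinuousLinearEquiv
    { toFun := fun M => M
      invFun := fun M => M
      map_add' := fun _ _ => rfl
      map_smul' := fun _ _ => rfl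
      left_inv := fun _ => rfl
      right_inv := fun _ => rfl }

lemma aux_hasDerivAt_inv (A : Finset ι) (L : ℝ → Matrix ι ι ℝ) (θ₀ : ℝ)
    (hdiff : ∀ i j, DifferentiableAt ℝ (fun θ => L θ i j) θ₀)
    (IAbar : Matrix ι ι ℝ)
    (hinv : IsUnit (L θ₀ + IAbar).det)
    (L' : Matrix ι ι ℝ)
    (hL' : ∀ i j, L' i j = deriv (fun θ => L θ i j) θ₀)
    (i j : ι) :
    HasDerivAt (fun θ => (L θ + IAbar)⁻¹ i j)
      ((-((L θ₀ + IAbar)⁻¹ * L' * (L θ₀ + IAbar)⁻¹)) i j) θ₀ := by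
  set e := matrixCLE ι with he
  set M : ℝ → Matrix ι ι ℝ := fun θ => L θ + IAbar with hM
  have hpi : HasDerivAt (fun θ => (e (M θ) : ι → ι → ℝ)) (e L') θ₀ := by
    refine hasDerivAt_pi.2 fun a => hasDerivAt_pi.2 fun b => ?_
    have h := (hdiff a b).hasDerivAt.add_const (IAbar a b)
    rw [← hL' a b] at h
    exact h
  have hMd : HasDerivAt M L' θ₀ := by
    have h := (e.symm.toContinuousLinearMap.hasFDerivAt).comp_hasDerivAt θ₀ hpi
    simp only [Function.comp_def, ContinuousLinearEquiv.coe_coe, ContinuousLinearEquiv.symm_apply_apply] at h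
    exact h
  have hU : IsUnit (M θ₀) := (Matrix.isUnit_iff_isUnit_det _).mpr hinv
  obtain ⟨u, hu⟩ := hU
  have hinvF : HasFDerivAt Ring.inverse
      (-ContinuousLinearMap.mulLeftRight ℝ (Matrix ι ι ℝ) ↑u⁻¹ ↑u⁻¹) (M θ₀) := by
    rw [← hu]; exact hasFDerivAt_ringInverse u
  have hcomp : HasDerivAt (fun θ => Ring.inverse (M θ))
      (-((↑u⁻¹ : Matrix ι ι ℝ) * L' * (↑u⁻¹ : Matrix ι ι ℝ))) θ₀ := by
    have h := hinvF.comp_hasDerivAt θ₀ hMd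
    simp only [Function.comp_def] at h
    exact h
  have hcoe : (↑u⁻¹ : Matrix ι ι ℝ) = (M θ₀)⁻¹ := by
    rw [← hu, ← Matrix.coe_units_inv]
  rw [hcoe] at hcomp
  have hfun : (fun θ => Ring.inverse (M θ)) = fun θ => (M θ)⁻¹ := by
    funext θ; rw [Matrix.nonsing_inv_eq_ringInverse]
  rw [hfun] at hcomp
  have hback : HasDerivAt (fun θ => (e ((M θ)⁻¹) : ι → ι → ℝ))
      (e (-((M θ₀)⁻¹ * L' * (M θ₀)⁻¹))) θ₀ := by
    have h := (e.toContinuousLinearMap.hasFDerivAt).comp_hasDerivAt θ₀ hcomp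
    simp only [Function.comp_def, ContinuousLinearEquiv.coe_coe] at h
    exact h
  exact hasDerivAt_pi.1 (hasDerivAt_pi.1 hback i) j

end Aux

/-- Proposition 1 (derivative of the conditional MIC objective): for a finite
index set `ι`, `A ⊆ ι`, and a map `θ ↦ L(θ)` of real matrices indexed by
`ι × ι` whose entries are differentiable at `θ₀`, with `L(θ₀) + I_Ā`
invertible, the MIC objective `θ ↦ tr(I − [(L(θ) + I_Ā)⁻¹]_{ι\A})` is
differentiable at `θ₀` with derivative
`tr((L(θ₀) + I_Ā)⁻¹ · I_Ā · (L(θ₀) + I_Ā)⁻¹ · L'(θ₀))`, where `L'(θ₀)` is the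
entrywise derivative of `L` at `θ₀`. -/
theorem deriv_conditional_mic_objective {ι : Type*} [Fintype ι] [DecidableEq ι]
    (A : Finset ι) (L : ℝ → Matrix ι ι ℝ) (θ₀ : ℝ)
    (hdiff : ∀ i j, DifferentiableAt ℝ (fun θ => L θ i j) θ₀)
    (IAbar : Matrix ι ι ℝ)
    (hIAbar : IAbar = Matrix.diagonal fun i => if i ∈ A then (0 : ℝ) else 1)
    (hinv : IsUnit (L θ₀ + IAbar).det)
    (L' : Matrix ι ι ℝ)
    (hL' : ∀ i j, L' i j = deriv (fun θ => L θ i j) θ₀) :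
    HasDerivAt
      (fun θ => ((1 : Matrix (Aᶜ : Finset ι) (Aᶜ : Finset ι) ℝ)
          - ((L θ + IAbar)⁻¹).submatrix (fun x : (Aᶜ : Finset ι) => x.1)
              (fun x : (Aᶜ : Finset ι) => x.1)).trace)
      (((L θ₀ + IAbar)⁻¹ * IAbar * (L θ₀ + IAbar)⁻¹ * L').trace) θ₀ := by
  set N : Matrix ι ι ℝ := (L θ₀ + IAbar)⁻¹ with hN
  have key : ∀ i : (Aᶜ : Finset ι),
      HasDerivAt (fun θ => (1 : ℝ) - (L θ + IAbar)⁻¹ i.1 i.1)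
        ((N * L' * N) i.1 i.1) θ₀ := by
    intro i
    have h := (aux_hasDerivAt_inv A L θ₀ hdiff IAbar hinv L' hL' i.1 i.1).const_sub 1
    simpa using h
  have hsum : HasDerivAt
      (fun θ => ∑ i : (Aᶜ : Finset ι), ((1 : ℝ) - (L θ + IAbar)⁻¹ i.1 i.1))
      (∑ i : (Aᶜ : Finset ι), (N * L' * N) i.1 i.1) θ₀ :=
    HasDerivAt.fun_sum fun i _ => key i
  have hfun : (fun θ => ((1 : Matrix (Aᶜ : Finset ι) (Aᶜ : Finset ι) ℝ)
          - ((L θ + IAbar)⁻¹).submatrix (fun x : (Aᶜ : Finset ι) => x.1)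
              (fun x : (Aᶜ : Finset ι) => x.1)).trace)
      = fun θ => ∑ i : (Aᶜ : Finset ι), ((1 : ℝ) - (L θ + IAbar)⁻¹ i.1 i.1) := by
    funext θ
    simp [Matrix.trace, Matrix.diag, Matrix.sub_apply, Matrix.submatrix_apply,
      Matrix.one_apply_eq]
  have hval : (N * IAbar * N * L').trace
      = ∑ i : (Aᶜ : Finset ι), (N * L' * N) i.1 i.1 := by
    have h1 : (N * IAbar * N * L').trace = (IAbar * (N * L' * N)).trace := by
      have e1 : N * IAbar * N * L' = N * (IAbar * N * L') := by
        simp [mul_assoc]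
      have e2 : IAbar * N * L' * N = IAbar * (N * L' * N) := by
        simp [mul_assoc]
      rw [e1, Matrix.trace_mul_comm, e2]
    rw [h1, hIAbar]
    have h2 : (Matrix.diagonal (fun i => if i ∈ A then (0 : ℝ) else 1)
        * (N * L' * N)).trace
        = ∑ i : ι, if i ∈ A then (0 : ℝ) else (N * L' * N) i i := by
      simp [Matrix.trace, Matrix.diag, Matrix.diagonal_mul, ite_mul]
    rw [h2]
    have h3 : ∑ i : ι, (if i ∈ A then (0 : ℝ) else (N * L' * N) i i)
        = ∑ i ∈ Aᶜ, (N * L' * N) i i := by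
      rw [← Finset.sum_compl_add_sum A (fun i => if i ∈ A then (0 : ℝ) else (N * L' * N) i i)]
      rw [Finset.sum_congr rfl (fun i hi => if_neg (Finset.mem_compl.mp hi)),
        Finset.sum_congr rfl (fun i hi => if_pos hi), Finset.sum_const_zero, add_zero]
    rw [h3, ← Finset.sum_coe_sort]
  rw [hfun]
  rw [show ((L θ₀ + IAbar)⁻¹ * IAbar * (L θ₀ + IAbar)⁻¹ * L').trace
      = ∑ i : (Aᶜ : Finset ι), (N * L' * N) i.1 i.1 from hval]
  exact hsum
end
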